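/- Let α, β, γ, δ : ℝ → ℝ and define the log-density ℓf(x, θ) = α(θ)·γ(x) − β(θ) + δ(x). For data x₁, …, x_T and parameters θ0, θ1, define the two-segment log-likelihood ℓ(θ0, θ1, τ) = Σ_{t=1}^{τ} ℓf(x_t, θ0) + Σ_{t=τ+1}^{T} ℓf(x_t, θ1). Then for any 0 ≤ τ_i < τ_j ≤ T, ℓ(θ0, θ1, τ_i) − ℓ(θ0, θ1, τ_j) = [α(θ1) − α(θ0)] · Σ_{t=τ_i+1}^{τ_j} γ(x_t) − [β(θ1) − β(θ0)] · (τ_j − τ_i). -/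

import Mathlib

open Finset

theorem expFam_loglik_difference
    (α β γ δ : ℝ → ℝ) (T : ℕ) (x : ℕ → ℝ) (θ0 θ1 : ℝ)
    (τi τj : ℕ) (hij : τi < τj) (hjT : τj ≤ T) :
    (((∑ t ∈ Finset.Icc 1 τi, (α θ0 * γ (x t) - β θ0 + δ (x t))) +
        ∑ t ∈ Finset.Ioc τi T, (α θ1 * γ (x t) - β θ1 + δ (x t))) -
      ((∑ t ∈ Finset.Icc 1 τj, (α θ0 * γ (x t) - β θ0 + δ (x t))) +
        ∑ t ∈ Finset.Ioc τj T, (α θ1 * γ (x t) - β θ1 + δ (x t))))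
    = (α θ1 - α θ0) * (∑ t ∈ Finset.Ioc τi τj, γ (x t))
      - (β θ1 - β θ0) * ((τj : ℝ) - τi) := by
  have hle : τi ≤ τj := hij.le
  have h1 : Finset.Icc 1 τi = Finset.Ioc 0 τi := by
    ext t; simp [Nat.lt_iff_add_one_le]
  have h2 : Finset.Icc 1 τj = Finset.Ioc 0 τj := by
    ext t; simp [Nat.lt_iff_add_one_le]
  rw [h1, h2,
    ← Finset.sum_Ioc_consecutive (fun t => α θ0 * γ (x t) - β θ0 + δ (x t))
      (Nat.zero_le τi) hle,
    ← Finset.sum_Ioc_consecutive (fun t => α θ1 * γ (x t) - β θ1 + δ (x t))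
      hle hjT]
  have hcard : ((Finset.Ioc τi τj).card : ℝ) = (τj : ℝ) - τi := by
    rw [Nat.card_Ioc]
    push_cast [Nat.cast_sub hle]
    ring
  rw [Finset.mul_sum, ← hcard]
  rw [show ((Finset.Ioc τi τj).card : ℝ) = ∑ t ∈ Finset.Ioc τi τj, (1 : ℝ) by
    simp]
  rw [Finset.mul_sum, ← Finset.sum_sub_distrib]
  have : ∀ s : Finset ℕ,
      ((∑ t ∈ Finset.Ioc 0 τi, (α θ0 * γ (x t) - β θ0 + δ (x t))) +
        ((∑ t ∈ s, (α θ1 * γ (x t) - β θ1 + δ (x t))) +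
          ∑ t ∈ Finset.Ioc τj T, (α θ1 * γ (x t) - β θ1 + δ (x t)))) -
      (((∑ t ∈ Finset.Ioc 0 τi, (α θ0 * γ (x t) - β θ0 + δ (x t))) +
          ∑ t ∈ s, (α θ0 * γ (x t) - β θ0 + δ (x t))) +
        ∑ t ∈ Finset.Ioc τj T, (α θ1 * γ (x t) - β θ1 + δ (x t)))
      = ∑ t ∈ s, ((α θ1 - α θ0) * γ (x t) - (β θ1 - β θ0) * 1) := by
    intro s
    have h2 : ∑ t ∈ s, ((α θ1 - α θ0) * γ (x t) - (β θ1 - β θ0) * 1)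
        = (∑ t ∈ s, (α θ1 * γ (x t) - β θ1 + δ (x t)))
          - ∑ t ∈ s, (α θ0 * γ (x t) - β θ0 + δ (x t)) := by
      rw [← Finset.sum_sub_distrib]
      exact Finset.sum_congr rfl fun t _ => by ring
    rw [h2]; ring
  exact this _
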